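/- Let d ≥ 6 and let I ⊆ ℝ be an interval. There exists a constant C = C(d) such that for every measurable v : I × ℝ^d → ℂ, with Ω' := {(t,x) ∈ I × ℝ^d : |v(t,x)| ≤ W(x)/4}, one has ‖ W^{p_c−3} |∇W| · |v|² ‖_{L^2_t L^{2d/(d+2)}_x(Ω')} ≤ C ‖v‖_{L^{q₀}_t L^{r₀}_x(I×ℝ^d)}^{(2d+3)/(2(d−2))}, where q₀ = (2d+3)/(d−2) and r₀ = 2d(2d+3)/((d−2)(2d−1)). -/

import Mathlib

open MeasureTheory
open scoped ENNReal

noncomputable section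

/-- ℝ^d as Euclidean space -/
abbrev Euc (d : ℕ) := EuclideanSpace ℝ (Fin d)

/-- The ground state W(x) = (1 + |x|²/(d(d−2)))^{−(d−2)/2}. -/
def Wgs (d : ℕ) (x : Euc d) : ℝ :=
  (1 + ‖x‖ ^ 2 / ((d : ℝ) * ((d : ℝ) - 2))) ^ (-(((d : ℝ) - 2) / 2))

/-- p_c = (d+2)/(d-2) -/
def pc (d : ℕ) : ℝ := ((d : ℝ) + 2) / ((d : ℝ) - 2)

/-- Mixed norm ‖F‖_{L^q_t L^r_x(Ω)} = (∫_I (∫_{ℝ^d} |F(t,x)|^r 1_Ω(t,x) dx)^{q/r} dt)^{1/q}. -/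
def mixNorm (d : ℕ) (q r : ℝ) (I : Set ℝ) (Ω : Set (ℝ × Euc d))
    (F : ℝ × Euc d → ℝ) : ℝ≥0∞ :=
  (∫⁻ t in I,
      (∫⁻ x, Ω.indicator (fun p => ENNReal.ofReal (|F p| ^ r)) (t, x)) ^ (q / r)) ^ (1 / q)

/-- time exponent q₀ = (2d+3)/(d−2) -/
def q0 (d : ℕ) : ℝ := (2 * (d : ℝ) + 3) / ((d : ℝ) - 2)

/-- space exponent r₀ = 2d(2d+3)/((d−2)(2d−1)) -/
def r0 (d : ℕ) : ℝ := 2 * (d : ℝ) * (2 * (d : ℝ) + 3) / (((d : ℝ) - 2) * (2 * (d : ℝ) - 1))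

set_option synthInstance.maxHeartbeats 1000000
set_option maxHeartbeats 1000000
set_option linter.unusedVariables false

lemma norm_fderiv_Wgs_le (d : ℕ) (hd : 6 ≤ d) (x : Euc d) :
    ‖fderiv ℝ (Wgs d) x‖ ≤
      2 * (((d : ℝ) - 2) / 2) / ((d : ℝ) * ((d : ℝ) - 2)) * ‖x‖ *
        (1 + ‖x‖ ^ 2 / ((d : ℝ) * ((d : ℝ) - 2))) ^ (-(((d : ℝ) - 2) / 2) - 1) := by
  have hD : (6 : ℝ) ≤ (d : ℝ) := by exact_mod_cast hd
  set c : ℝ := (d : ℝ) * ((d : ℝ) - 2) with hcdef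
  set γ : ℝ := ((d : ℝ) - 2) / 2 with hγdef
  have hc : 0 < c := by nlinarith
  have hγ : 0 < γ := by simp only [hγdef]; linarith
  have hb : 0 < 1 + ‖x‖ ^ 2 / c := by positivity
  have hψ : HasFDerivAt (fun y : Euc d => ‖y‖ ^ 2) (2 • (innerSL ℝ x)) x :=
    (hasStrictFDerivAt_norm_sq x).hasFDerivAt
  have hlin : HasDerivAt (fun s : ℝ => 1 + s / c) (1 / c) (‖x‖ ^ 2) := by
    simpa using ((hasDerivAt_id (‖x‖ ^ 2)).div_const c).const_add (1 : ℝ)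
  have hcomp1 : HasDerivAt (fun s : ℝ => (1 + s / c) ^ (-γ))
      (((-γ) * (1 + ‖x‖ ^ 2 / c) ^ (-γ - 1)) * (1 / c)) (‖x‖ ^ 2) := by
    have := hlin.rpow_const (p := -γ) (Or.inl hb.ne')
    convert this using 1
    ring
  have hW : HasFDerivAt (Wgs d)
      ((((-γ) * (1 + ‖x‖ ^ 2 / c) ^ (-γ - 1)) * (1 / c)) • ((2:ℕ) • innerSL ℝ x)) x := by
    have h := hcomp1.comp_hasFDerivAt x hψ; exact h
  rw [hW.fderiv]
  set B : ℝ := (1 + ‖x‖ ^ 2 / c) ^ (-γ - 1) with hBdef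
  have hB : 0 ≤ B := Real.rpow_nonneg hb.le _
  apply ContinuousLinearMap.opNorm_le_bound
  · positivity
  · intro y
    have happ : ((((-γ * B) * (1 / c)) • ((2:ℕ) • innerSL ℝ x)) y)
        = ((-γ * B) * (1 / c)) * (2 * (inner ℝ x y : ℝ)) := by
      simp [two_smul]; ring
    rw [happ, Real.norm_eq_abs]
    simp only [abs_mul, abs_neg, abs_of_nonneg hγ.le, abs_of_nonneg hB,
      abs_of_nonneg (by positivity : (0:ℝ) ≤ 1/c), abs_of_nonneg (by norm_num : (0:ℝ) ≤ (2:ℝ))]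
    have hinner : |(inner ℝ x y : ℝ)| ≤ ‖x‖ * ‖y‖ := abs_real_inner_le_norm x y
    calc γ * B * (1 / c) * (2 * |(inner ℝ x y : ℝ)|)
        ≤ γ * B * (1 / c) * (2 * (‖x‖ * ‖y‖)) := by
          apply mul_le_mul_of_nonneg_left (by linarith) (by positivity)
      _ = 2 * γ / c * ‖x‖ * B * ‖y‖ := by ring


lemma lintegral_g_rpow_lt_top (d : ℕ) (hd : 6 ≤ d) (K : ℝ) (hK : 0 ≤ K) :
    ∫⁻ x : Euc d, ENNReal.ofReal
      ((K * (‖x‖ * (1 + ‖x‖ ^ 2 / ((d : ℝ) * ((d : ℝ) - 2))) ^ (-(5:ℝ)/4))) ^ (4 * (d : ℝ) / 5))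
      < ∞ := by
  have hD : (6 : ℝ) ≤ (d : ℝ) := by exact_mod_cast hd
  set D : ℝ := (d : ℝ) with hDdef
  set c : ℝ := D * (D - 2) with hcdef
  have hc : 0 < c := by nlinarith
  have hc1 : 1 ≤ c := by nlinarith
  set ae : ℝ := 4 * D / 5 with haedef
  have hae : 0 < ae := by positivity
  set Kb : ℝ := K ^ ae * c ^ (ae / 2) * (2 * c) ^ (3 * ae / 4) with hKbdef
  have hKb : 0 ≤ Kb := by positivity
  have hbound : ∀ x : Euc d,
      (K * (‖x‖ * (1 + ‖x‖ ^ 2 / c) ^ (-(5:ℝ)/4))) ^ ae ≤ Kb * (1 + ‖x‖) ^ (-(6 * D / 5)) := by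
    intro x
    set b : ℝ := 1 + ‖x‖ ^ 2 / c with hbdef
    have hb : 0 < b := by positivity
    have hcb : c * b = c + ‖x‖ ^ 2 := by
      rw [hbdef]; field_simp
    have hg0 : 0 ≤ ‖x‖ * b ^ (-(5:ℝ)/4) := by positivity
    -- ‖x‖ ≤ c^(1/2) * b^(1/2)
    have hxb : ‖x‖ ≤ c ^ ((1:ℝ)/2) * b ^ ((1:ℝ)/2) := by
      rw [← Real.mul_rpow hc.le hb.le]
      calc ‖x‖ = (‖x‖ ^ 2) ^ ((1:ℝ)/2) := by
            rw [← Real.rpow_natCast ‖x‖ 2, ← Real.rpow_mul (norm_nonneg x)]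
            norm_num
        _ ≤ (c * b) ^ ((1:ℝ)/2) := by
            apply Real.rpow_le_rpow (by positivity) _ (by norm_num)
            nlinarith [norm_nonneg x]
    -- g ≤ c^(1/2) * b^(-3/4)
    have hgb : ‖x‖ * b ^ (-(5:ℝ)/4) ≤ c ^ ((1:ℝ)/2) * b ^ (-(3:ℝ)/4) := by
      calc ‖x‖ * b ^ (-(5:ℝ)/4) ≤ (c ^ ((1:ℝ)/2) * b ^ ((1:ℝ)/2)) * b ^ (-(5:ℝ)/4) := by
            apply mul_le_mul_of_nonneg_right hxb (by positivity)
        _ = c ^ ((1:ℝ)/2) * b ^ (-(3:ℝ)/4) := by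
            rw [mul_assoc, ← Real.rpow_add hb]
            norm_num
    -- (1+‖x‖)^2 ≤ 2*c*b
    have hbb : (1 + ‖x‖) ^ 2 ≤ 2 * c * b := by
      nlinarith [norm_nonneg x, sq_nonneg (1 - ‖x‖)]
    -- b^(-3ae/4) ≤ (2c)^(3ae/4) * (1+‖x‖)^(-3ae/2)
    have h1x : (0:ℝ) < 1 + ‖x‖ := by positivity
    have hbig : b ^ (-(3 * ae / 4)) ≤ (2 * c) ^ (3 * ae / 4) * (1 + ‖x‖) ^ (-(3 * ae / 2)) := by
      have h1 : b ^ (-(3 * ae / 4)) ≤ ((1 + ‖x‖) ^ 2 / (2 * c)) ^ (-(3 * ae / 4)) := by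
        apply Real.rpow_le_rpow_of_nonpos (by positivity) _ (neg_nonpos.mpr (by positivity))
        rw [div_le_iff₀ (by positivity)]
        linarith [hbb]
      refine h1.trans_eq ?_
      have hw : ((2 * c) ^ (-(3 * ae / 4)))⁻¹ = (2 * c) ^ (3 * ae / 4) := by
        rw [← Real.rpow_neg (by positivity), neg_neg]
      rw [Real.div_rpow (by positivity) (by positivity : (0:ℝ) ≤ 2 * c), div_eq_mul_inv, hw,
        ← Real.rpow_natCast (1 + ‖x‖) 2, ← Real.rpow_mul h1x.le,
        show ((2:ℕ):ℝ) * (-(3 * ae / 4)) = -(3 * ae / 2) by push_cast; ring]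
      ring
    calc (K * (‖x‖ * b ^ (-(5:ℝ)/4))) ^ ae
        = K ^ ae * (‖x‖ * b ^ (-(5:ℝ)/4)) ^ ae := Real.mul_rpow hK hg0
      _ ≤ K ^ ae * (c ^ ((1:ℝ)/2) * b ^ (-(3:ℝ)/4)) ^ ae :=
          mul_le_mul_of_nonneg_left (Real.rpow_le_rpow hg0 hgb hae.le) (by positivity)
      _ = K ^ ae * (c ^ (ae/2) * b ^ (-(3 * ae / 4))) := by
          rw [Real.mul_rpow (by positivity) (by positivity), ← Real.rpow_mul hc.le,
            ← Real.rpow_mul hb.le, show (1:ℝ)/2 * ae = ae/2 by ring,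
            show (-(3:ℝ)/4) * ae = -(3 * ae / 4) by ring]
      _ ≤ K ^ ae * (c ^ (ae/2) * ((2 * c) ^ (3 * ae / 4) * (1 + ‖x‖) ^ (-(3 * ae / 2)))) := by
          apply mul_le_mul_of_nonneg_left _ (by positivity)
          exact mul_le_mul_of_nonneg_left hbig (by positivity)
      _ = Kb * (1 + ‖x‖) ^ (-(6 * D / 5)) := by
          rw [show -(3 * ae / 2) = -(6 * D / 5) by rw [haedef]; ring, hKbdef]; ring
  calc ∫⁻ x : Euc d, ENNReal.ofReal
        ((K * (‖x‖ * (1 + ‖x‖ ^ 2 / c) ^ (-(5:ℝ)/4))) ^ ae)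
      ≤ ∫⁻ x : Euc d, ENNReal.ofReal (Kb * (1 + ‖x‖) ^ (-(6 * D / 5))) :=
        lintegral_mono fun x => ENNReal.ofReal_le_ofReal (hbound x)
    _ = ENNReal.ofReal Kb * ∫⁻ x : Euc d, ENNReal.ofReal ((1 + ‖x‖) ^ (-(6 * D / 5))) := by
        simp_rw [ENNReal.ofReal_mul hKb]
        rw [lintegral_const_mul' _ _ ENNReal.ofReal_ne_top]
    _ < ∞ := by
        apply ENNReal.mul_lt_top ENNReal.ofReal_lt_top
        apply finite_integral_one_add_norm
        rw [finrank_euclideanSpace_fin]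
        rw [hDdef]
        have : (0:ℝ) < (d:ℝ) := by linarith
        linarith

/-- on Ω' = {|v| ≤ W/4},
‖W^{p_c−3}|∇W||v|²‖_{L²_t L^{2d/(d+2)}_x(Ω')} ≤ C ‖v‖_{L^{q₀}_t L^{r₀}_x}^{(2d+3)/(2(d−2))}. -/
theorem Wpc3_gradW_v2_small_regime (d : ℕ) (hd : 6 ≤ d) (I : Set ℝ) (hI : I.OrdConnected) :
    ∃ C : ℝ, 0 < C ∧ ∀ v : ℝ × Euc d → ℂ, Measurable v →
      mixNorm d 2 (2 * (d : ℝ) / ((d : ℝ) + 2)) I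
          {p : ℝ × Euc d | p.1 ∈ I ∧ ‖v p‖ ≤ Wgs d p.2 / 4}
          (fun p => (Wgs d p.2) ^ (pc d - 3) * ‖fderiv ℝ (Wgs d) p.2‖ * ‖v p‖ ^ 2) ≤
        ENNReal.ofReal C *
          (mixNorm d (q0 d) (r0 d) I Set.univ (fun p => ‖v p‖)) ^
            ((2 * (d : ℝ) + 3) / (2 * ((d : ℝ) - 2))) := by
  have hD : (6 : ℝ) ≤ (d : ℝ) := by exact_mod_cast hd
  have h2 : (0:ℝ) < (d:ℝ) - 2 := by linarith
  have hd0 : (0:ℝ) < (d:ℝ) := by linarith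
  have hd2' : ((d:ℝ) - 2) ≠ 0 := h2.ne'
  have hdp2 : ((d:ℝ) + 2) ≠ 0 := by positivity
  have hd21 : (2*(d:ℝ) - 1) ≠ 0 := by intro h; nlinarith
  have h2d3 : (0:ℝ) < 2*(d:ℝ)+3 := by linarith
  set c : ℝ := (d : ℝ) * ((d : ℝ) - 2) with hcdef
  have hc : 0 < c := mul_pos hd0 h2
  set γ : ℝ := ((d : ℝ) - 2) / 2 with hγdef
  have hγ : 0 < γ := by rw [hγdef]; linarith
  set α : ℝ := (2 * (d : ℝ) + 3) / (2 * ((d : ℝ) - 2)) with hαdef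
  have hα : 0 < α := div_pos h2d3 (by linarith)
  have h2α : 0 ≤ 2 - α := by
    rw [hαdef, sub_nonneg, div_le_iff₀ (by linarith)]; linarith
  set K : ℝ := 2 * γ / c * (4:ℝ) ^ (α - 2) with hKdef
  have hK : 0 < K := by
    apply mul_pos (by positivity)
    exact Real.rpow_pos_of_pos (by norm_num) _
  set g : Euc d → ℝ := fun x => ‖x‖ * (1 + ‖x‖ ^ 2 / c) ^ (-(5:ℝ)/4) with hgdef
  have hg : ∀ x, 0 ≤ g x := by
    intro x; rw [hgdef]
    have : (0:ℝ) < 1 + ‖x‖^2/c := by positivity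
    positivity
  have hgc : Continuous g := by
    rw [hgdef]
    apply continuous_norm.mul
    apply Continuous.rpow_const (by continuity)
    intro x
    exact Or.inl (by positivity)
  set ae : ℝ := 4 * (d:ℝ) / 5 with haedef
  have hae : 0 < ae := by rw [haedef]; positivity
  set r : ℝ := 2 * (d:ℝ) / ((d:ℝ) + 2) with hrdef
  have hr : 0 < r := div_pos (by linarith) (by linarith)
  set p' : ℝ := 2 * ((d:ℝ) + 2) / 5 with hpdef
  set q' : ℝ := 2 * ((d:ℝ) + 2) / (2 * (d:ℝ) - 1) with hqdef
  have hpq' : Real.HolderConjugate p' q' := by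
    rw [Real.holderConjugate_iff]; constructor
    · rw [hpdef, lt_div_iff₀ (by norm_num)]; linarith
    · rw [hpdef, hqdef]; field_simp; ring
  have hrp : r * p' = ae := by rw [hrdef, hpdef, haedef]; field_simp; ring
  have hpc : pc d = ((d:ℝ) + 2) / ((d:ℝ) - 2) := rfl
  have hq0 : q0 d = (2 * (d:ℝ) + 3) / ((d:ℝ) - 2) := rfl
  have hr0 : r0 d = 2 * (d:ℝ) * (2 * (d:ℝ) + 3) / (((d:ℝ) - 2) * (2 * (d:ℝ) - 1)) := rfl
  have harq : α * r * q' = r0 d := by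
    rw [hαdef, hrdef, hqdef, hr0]; field_simp
  have h2d3' : (2*(d:ℝ)+3) ≠ 0 := h2d3.ne'
  have hd0' : (d:ℝ) ≠ 0 := hd0.ne'
  have hr0pos : 0 < r0 d := by
    rw [hr0]
    apply div_pos <;> nlinarith
  have hpp : 1 / p' * (2 / r) = 2 / ae := by
    rw [hpdef, hrdef, haedef]; field_simp; ring
  have hqq : 1 / q' * (2 / r) = q0 d / r0 d := by
    rw [hqdef, hrdef, hq0, hr0]
    field_simp
  have h12 : 1 / q0 d * α = 1 / 2 := by
    rw [hq0, hαdef]; field_simp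
  set J : ℝ≥0∞ := ∫⁻ x : Euc d, ENNReal.ofReal ((K * g x) ^ ae) with hJdef
  have hJfin : J < ∞ := by
    rw [hJdef]
    simp only [hgdef, hcdef, haedef]
    exact lintegral_g_rpow_lt_top d hd K hK.le
  have hJne : J ^ (1/ae) ≠ ∞ := ENNReal.rpow_ne_top_of_nonneg (by positivity) hJfin.ne
  refine ⟨(J ^ (1/ae)).toReal + 1, by positivity, fun v hv => ?_⟩
  have hJC : J ^ (1/ae) ≤ ENNReal.ofReal ((J ^ (1/ae)).toReal + 1) := by
    conv_lhs => rw [← ENNReal.ofReal_toReal hJne]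
    exact ENNReal.ofReal_le_ofReal (by linarith)
  -- pointwise bound
  have hpt : ∀ t : ℝ, ∀ x : Euc d, ‖v (t,x)‖ ≤ Wgs d x / 4 →
      Wgs d x ^ (pc d - 3) * ‖fderiv ℝ (Wgs d) x‖ * ‖v (t,x)‖ ^ 2 ≤
        K * g x * ‖v (t,x)‖ ^ α := by
    intro t x hvle
    set b : ℝ := 1 + ‖x‖ ^ 2 / c with hbdef
    have hb : 0 < b := by rw [hbdef]; positivity
    have hWb : Wgs d x = b ^ (-γ) := rfl
    have hW : 0 < Wgs d x := by rw [hWb]; positivity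
    have hfd := norm_fderiv_Wgs_le d hd x
    rw [← hcdef, ← hγdef, ← hbdef] at hfd
    have e1 : ‖v (t,x)‖ ^ (2:ℕ) = ‖v (t,x)‖ ^ α * ‖v (t,x)‖ ^ (2 - α) := by
      rw [← Real.rpow_natCast ‖v (t,x)‖ 2, ← Real.rpow_add_of_nonneg (norm_nonneg _) hα.le h2α]
      norm_num
    have e2 : ‖v (t,x)‖ ^ (2 - α) ≤ (Wgs d x / 4) ^ (2 - α) :=
      Real.rpow_le_rpow (norm_nonneg _) hvle h2α
    have hWpc : 0 ≤ Wgs d x ^ (pc d - 3) := Real.rpow_nonneg hW.le _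
    calc Wgs d x ^ (pc d - 3) * ‖fderiv ℝ (Wgs d) x‖ * ‖v (t,x)‖ ^ 2
        ≤ Wgs d x ^ (pc d - 3) * (2 * γ / c * ‖x‖ * b ^ (-γ - 1)) *
            (‖v (t,x)‖ ^ α * (Wgs d x / 4) ^ (2 - α)) := by
          rw [e1]
          have hvα : 0 ≤ ‖v (t,x)‖ ^ α := Real.rpow_nonneg (norm_nonneg _) _
          apply mul_le_mul
          · exact mul_le_mul_of_nonneg_left hfd hWpc
          · exact mul_le_mul_of_nonneg_left e2 hvα
          · positivity
          · positivity
      _ = K * g x * ‖v (t,x)‖ ^ α := by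
          rw [div_eq_mul_inv (Wgs d x) 4,
            Real.mul_rpow hW.le (by norm_num : (0:ℝ) ≤ (4:ℝ)⁻¹),
            Real.inv_rpow (by norm_num : (0:ℝ) ≤ (4:ℝ)),
            ← Real.rpow_neg (by norm_num : (0:ℝ) ≤ (4:ℝ)),
            show -(2 - α) = α - 2 by ring, hWb,
            ← Real.rpow_mul hb.le, ← Real.rpow_mul hb.le]
          have hcomb : b ^ (-γ * (pc d - 3)) * b ^ (-γ - 1) * b ^ (-γ * (2 - α)) =
              b ^ (-(5:ℝ)/4) := by
            rw [← Real.rpow_add hb, ← Real.rpow_add hb]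
            congr 1
            rw [hpc, hγdef, hαdef]
            field_simp
            ring
          rw [hKdef, hgdef]
          linear_combination (2 * γ / c * ‖x‖ * (4:ℝ) ^ (α - 2) * ‖v (t,x)‖ ^ α) * hcomb
  simp only [mixNorm]
  set A : Euc d → ℝ≥0∞ := fun x => ENNReal.ofReal ((K * g x) ^ r) with hAdef
  set Bf : ℝ → Euc d → ℝ≥0∞ := fun t x => ENNReal.ofReal (‖v (t,x)‖ ^ (α * r)) with hBdef
  set Y : ℝ → ℝ≥0∞ := fun t => ∫⁻ x : Euc d, ENNReal.ofReal (‖v (t,x)‖ ^ (r0 d)) with hYdef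
  have hAm : Measurable A := by
    rw [hAdef]
    apply Measurable.ennreal_ofReal
    exact ((Real.continuous_rpow_const hr.le).comp (continuous_const.mul hgc)).measurable
  have hBm : ∀ t, Measurable (Bf t) := by
    intro t
    apply Measurable.ennreal_ofReal
    exact ((Real.continuous_rpow_const (by positivity)).measurable).comp
      ((hv.comp measurable_prodMk_left).norm)
  have hind : ∀ t x, ({p : ℝ × Euc d | p.1 ∈ I ∧ ‖v p‖ ≤ Wgs d p.2 / 4}).indicator
      (fun p => ENNReal.ofReal
        (|Wgs d p.2 ^ (pc d - 3) * ‖fderiv ℝ (Wgs d) p.2‖ * ‖v p‖ ^ 2| ^ r)) (t, x)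
      ≤ A x * Bf t x := by
    intro t x
    by_cases hmem : (t,x) ∈ {p : ℝ × Euc d | p.1 ∈ I ∧ ‖v p‖ ≤ Wgs d p.2 / 4}
    · rw [Set.indicator_of_mem hmem]
      simp only [Set.mem_setOf_eq] at hmem
      have hW : 0 < Wgs d x := Real.rpow_pos_of_pos (by positivity) _
      have hF0 : 0 ≤ Wgs d x ^ (pc d - 3) * ‖fderiv ℝ (Wgs d) x‖ * ‖v (t,x)‖ ^ 2 := by
        have := Real.rpow_nonneg hW.le (pc d - 3)
        positivity
      have h3 := Real.rpow_le_rpow hF0 (hpt t x hmem.2) hr.le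
      rw [abs_of_nonneg hF0]
      refine (ENNReal.ofReal_le_ofReal h3).trans_eq ?_
      rw [Real.mul_rpow (mul_nonneg hK.le (hg x)) (Real.rpow_nonneg (norm_nonneg _) _),
        ← Real.rpow_mul (norm_nonneg _),
        ENNReal.ofReal_mul (Real.rpow_nonneg (mul_nonneg hK.le (hg x)) _)]
    · rw [Set.indicator_of_notMem hmem]
      exact zero_le
  have hholder : ∀ t, (∫⁻ x : Euc d, A x * Bf t x) ≤ J ^ (1/p') * (Y t) ^ (1/q') := by
    intro t
    have h := ENNReal.lintegral_mul_le_Lp_mul_Lq (volume : Measure (Euc d)) hpq'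
      hAm.aemeasurable (hBm t).aemeasurable
    simp only [Pi.mul_apply] at h
    have eA : ∀ x : Euc d, A x ^ p' = ENNReal.ofReal ((K * g x) ^ ae) := by
      intro x
      rw [hAdef]
      dsimp only
      rw [ENNReal.ofReal_rpow_of_nonneg (Real.rpow_nonneg (mul_nonneg hK.le (hg x)) _)
          hpq'.pos.le,
        ← Real.rpow_mul (mul_nonneg hK.le (hg x)), hrp]
    have eB : ∀ x : Euc d, Bf t x ^ q' = ENNReal.ofReal (‖v (t,x)‖ ^ (r0 d)) := by
      intro x
      rw [hBdef]
      dsimp only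
      rw [ENNReal.ofReal_rpow_of_nonneg (Real.rpow_nonneg (norm_nonneg _) _)
          hpq'.symm.pos.le,
        ← Real.rpow_mul (norm_nonneg _), harq]
    calc (∫⁻ x : Euc d, A x * Bf t x)
        ≤ (∫⁻ x : Euc d, A x ^ p') ^ (1/p') * (∫⁻ x : Euc d, Bf t x ^ q') ^ (1/q') := h
      _ = J ^ (1/p') * (Y t) ^ (1/q') := by
          simp only [eA, eB, hJdef, hYdef]
  have hmain : (∫⁻ t in I, (∫⁻ x : Euc d,
        ({p : ℝ × Euc d | p.1 ∈ I ∧ ‖v p‖ ≤ Wgs d p.2 / 4}).indicator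
          (fun p => ENNReal.ofReal
            (|Wgs d p.2 ^ (pc d - 3) * ‖fderiv ℝ (Wgs d) p.2‖ * ‖v p‖ ^ 2| ^ r)) (t, x))
          ^ ((2:ℝ)/r))
      ≤ J ^ (2/ae) * ∫⁻ t in I, Y t ^ (q0 d / r0 d) := by
    calc (∫⁻ t in I, (∫⁻ x : Euc d,
          ({p : ℝ × Euc d | p.1 ∈ I ∧ ‖v p‖ ≤ Wgs d p.2 / 4}).indicator
            (fun p => ENNReal.ofReal
              (|Wgs d p.2 ^ (pc d - 3) * ‖fderiv ℝ (Wgs d) p.2‖ * ‖v p‖ ^ 2| ^ r)) (t, x))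
            ^ ((2:ℝ)/r))
        ≤ ∫⁻ t in I, (J ^ (1/p') * (Y t) ^ (1/q')) ^ ((2:ℝ)/r) := by
          apply lintegral_mono
          intro t
          apply ENNReal.rpow_le_rpow _ (by positivity)
          exact (lintegral_mono (hind t)).trans (hholder t)
      _ = ∫⁻ t in I, J ^ (2/ae) * Y t ^ (q0 d / r0 d) := by
          apply lintegral_congr
          intro t
          rw [ENNReal.mul_rpow_of_nonneg _ _ (by positivity), ← ENNReal.rpow_mul,
            ← ENNReal.rpow_mul, hpp, hqq]
      _ = J ^ (2/ae) * ∫⁻ t in I, Y t ^ (q0 d / r0 d) :=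
          lintegral_const_mul' _ _ (ENNReal.rpow_ne_top_of_nonneg (by positivity) hJfin.ne)
  have hY' : ∀ t, (∫⁻ x : Euc d, ENNReal.ofReal (‖v (t,x)‖ ^ (r0 d))) = Y t := by
    intro t
    rw [hYdef]
  simp only [Set.indicator_univ, abs_norm]
  simp only [hY']
  rw [← ENNReal.rpow_mul, h12]
  calc (∫⁻ t in I, (∫⁻ x : Euc d,
        ({p : ℝ × Euc d | p.1 ∈ I ∧ ‖v p‖ ≤ Wgs d p.2 / 4}).indicator
          (fun p => ENNReal.ofReal
            (|Wgs d p.2 ^ (pc d - 3) * ‖fderiv ℝ (Wgs d) p.2‖ * ‖v p‖ ^ 2| ^ r)) (t, x))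
          ^ ((2:ℝ)/r)) ^ ((1:ℝ)/2)
      ≤ (J ^ (2/ae) * ∫⁻ t in I, Y t ^ (q0 d / r0 d)) ^ ((1:ℝ)/2) :=
        ENNReal.rpow_le_rpow hmain (by norm_num)
    _ = J ^ (1/ae) * (∫⁻ t in I, Y t ^ (q0 d / r0 d)) ^ ((1:ℝ)/2) := by
        rw [ENNReal.mul_rpow_of_nonneg _ _ (by norm_num), ← ENNReal.rpow_mul,
          show 2/ae * (1/2 : ℝ) = 1/ae by ring]
    _ ≤ ENNReal.ofReal ((J ^ (1/ae)).toReal + 1) *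
          (∫⁻ t in I, Y t ^ (q0 d / r0 d)) ^ ((1:ℝ)/2) := mul_le_mul_left hJC _
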